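/- Let i ∈ ℕ and let g : ℝ → ℝ be a continuous function for which there exist constants C > 0 and δ > 0 with |g(u)| ≤ C·e^{−δu} for all u ≥ 0. Then, as t → 0⁺, the integral ∫_{(0,2)} (1/(2t)) · g(r²/t) · r^{2i+1} dr converges; its limit equals (1/4)·∫_{(0,∞)} g(u) du if i = 0, and equals 0 if i ≥ 1. -/

import Mathlib

open MeasureTheory Filter

/-- For a continuous, exponentially decaying `g`, the integrals
`∫_{(0,2)} (1/(2t)) g(r²/t) r^{2i+1} dr` converge as `t → 0⁺` to `(1/4)∫₀^∞ g(u) du` when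
`i = 0` and to `0` when `i ≥ 1`. -/
theorem cone_type_one_contribution (i : ℕ) (g : ℝ → ℝ) (hg : Continuous g)
    (C δ : ℝ) (hC : 0 < C) (hδ : 0 < δ)
    (hbound : ∀ u : ℝ, 0 ≤ u → |g u| ≤ C * Real.exp (-δ * u)) :
    Tendsto
      (fun t : ℝ => ∫ r in Set.Ioo (0 : ℝ) 2, (1 / (2 * t)) * g (r ^ 2 / t) * r ^ (2 * i + 1))
      (nhdsWithin 0 (Set.Ioi 0))
      (nhds (if i = 0 then (1 / 4) * ∫ u in Set.Ioi (0 : ℝ), g u else 0)) := by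
  -- integrability of `g u * u ^ i` on `(0, ∞)`
  have hintb : IntegrableOn (fun u : ℝ => C * (u ^ i * Real.exp (-δ * u))) (Set.Ioi 0) := by
    have h1 : IntegrableOn (fun u : ℝ => u ^ (i : ℝ) * Real.exp (-δ * u ^ (1 : ℝ)))
        (Set.Ioi 0) :=
      integrableOn_rpow_mul_exp_neg_mul_rpow (by exact_mod_cast neg_one_lt_zero.trans_le (Nat.cast_nonneg i)) zero_lt_one hδ
    have h2 : IntegrableOn (fun u : ℝ => u ^ i * Real.exp (-δ * u)) (Set.Ioi 0) := by
      refine h1.congr_fun (fun x _ => ?_) measurableSet_Ioi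
      simp [Real.rpow_natCast, Real.rpow_one]
    exact h2.const_mul C
  have hint : IntegrableOn (fun u : ℝ => g u * u ^ i) (Set.Ioi 0) := by
    refine Integrable.mono' hintb ((hg.mul (continuous_pow i)).aestronglyMeasurable) ?_
    filter_upwards [ae_restrict_mem measurableSet_Ioi] with x hx
    have hx0 : (0 : ℝ) ≤ x := le_of_lt hx
    have hxp : (0:ℝ) ≤ x ^ i := pow_nonneg hx0 i
    have : ‖g x * x ^ i‖ = |g x| * x ^ i := by
      rw [norm_mul, Real.norm_eq_abs, Real.norm_eq_abs, abs_of_nonneg hxp]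
    rw [this]
    exact le_of_le_of_eq (mul_le_mul_of_nonneg_right (hbound x hx0) hxp) (by ring)
  -- change of variables for each fixed `t > 0`
  have key : ∀ t : ℝ, 0 < t →
      (∫ r in Set.Ioo (0 : ℝ) 2, (1 / (2 * t)) * g (r ^ 2 / t) * r ^ (2 * i + 1))
        = (t ^ i / 4) * ∫ u in (0 : ℝ)..(4 / t), g u * u ^ i := by
    intro t ht
    have ht' : t ≠ 0 := ne_of_gt ht
    have hchg : (∫ r in (0 : ℝ)..2,
        (2 * r / t) • ((fun u : ℝ => (t ^ i / 4) * (g u * u ^ i)) ∘ (fun r => r ^ 2 / t)) r)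
        = ∫ u in ((0:ℝ) ^ 2 / t)..((2:ℝ) ^ 2 / t), (t ^ i / 4) * (g u * u ^ i) := by
      apply intervalIntegral.integral_comp_smul_deriv
      · intro x _
        simpa using ((hasDerivAt_pow 2 x).div_const t)
      · exact (continuous_const.mul continuous_id).div_const t |>.continuousOn
      · exact continuous_const.mul (hg.mul (continuous_pow i))
    have h02 : (∫ r in Set.Ioo (0 : ℝ) 2, (1 / (2 * t)) * g (r ^ 2 / t) * r ^ (2 * i + 1))
        = ∫ r in (0 : ℝ)..2, (1 / (2 * t)) * g (r ^ 2 / t) * r ^ (2 * i + 1) := by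
      rw [intervalIntegral.integral_of_le (by norm_num), integral_Ioc_eq_integral_Ioo]
    rw [h02]
    have heq : ∀ r : ℝ,
        (1 / (2 * t)) * g (r ^ 2 / t) * r ^ (2 * i + 1)
          = (2 * r / t) • ((fun u : ℝ => (t ^ i / 4) * (g u * u ^ i)) ∘ (fun r => r ^ 2 / t)) r := by
      intro r
      simp only [Function.comp_apply, smul_eq_mul, div_pow]
      field_simp
      ring
    rw [show (∫ r in (0:ℝ)..2, (1 / (2 * t)) * g (r ^ 2 / t) * r ^ (2 * i + 1))
        = ∫ r in (0:ℝ)..2,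
          (2 * r / t) • ((fun u : ℝ => (t ^ i / 4) * (g u * u ^ i)) ∘ (fun r => r ^ 2 / t)) r from
      intervalIntegral.integral_congr (fun r _ => heq r), hchg]
    rw [intervalIntegral.integral_const_mul]
    norm_num
  -- the limit of the transformed expression
  have htop : Tendsto (fun t : ℝ => 4 / t) (nhdsWithin 0 (Set.Ioi 0)) atTop := by
    simpa [div_eq_mul_inv] using tendsto_inv_nhdsGT_zero.const_mul_atTop (by norm_num : (0:ℝ) < 4)
  have hI : Tendsto (fun t : ℝ => ∫ u in (0 : ℝ)..(4 / t), g u * u ^ i)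
      (nhdsWithin 0 (Set.Ioi 0)) (nhds (∫ u in Set.Ioi (0:ℝ), g u * u ^ i)) :=
    (intervalIntegral_tendsto_integral_Ioi 0 hint tendsto_id).comp htop
  have hpow : Tendsto (fun t : ℝ => t ^ i / 4) (nhdsWithin 0 (Set.Ioi 0))
      (nhds ((0 : ℝ) ^ i / 4)) :=
    (((continuous_pow i).div_const 4).tendsto 0).mono_left nhdsWithin_le_nhds
  have hmain : Tendsto
      (fun t : ℝ => (t ^ i / 4) * ∫ u in (0 : ℝ)..(4 / t), g u * u ^ i)
      (nhdsWithin 0 (Set.Ioi 0))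
      (nhds (((0 : ℝ) ^ i / 4) * ∫ u in Set.Ioi (0:ℝ), g u * u ^ i)) := hpow.mul hI
  have hfinal : Tendsto
      (fun t : ℝ => ∫ r in Set.Ioo (0 : ℝ) 2, (1 / (2 * t)) * g (r ^ 2 / t) * r ^ (2 * i + 1))
      (nhdsWithin 0 (Set.Ioi 0))
      (nhds (((0 : ℝ) ^ i / 4) * ∫ u in Set.Ioi (0:ℝ), g u * u ^ i)) := by
    refine hmain.congr' ?_
    filter_upwards [self_mem_nhdsWithin] with t ht
    exact (key t ht).symm
  rcases Nat.eq_zero_or_pos i with hi | hi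
  · subst hi
    simpa using hfinal
  · have : i ≠ 0 := Nat.pos_iff_ne_zero.mp hi
    simpa [this, zero_pow this] using hfinal
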